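/- For all positive integers k and r, one has the identity: the sum over all non-negative integers c_1,…,c_k with c_1 + … + c_k = r of |𝓛(c)| / ∏_{i=1}^k (c_i! · i^{c_i}) equals (1/r!) times the sum over all tuples (a_1,…,a_r) ∈ {1,…,k}^r of |𝓛*(a)| / (a_1 ⋯ a_r). -/

import Mathlib

open scoped BigOperators

noncomputable section

/-- The set `𝓛(c) = { m₁ + 2m₂ + ⋯ + k·m_k : 0 ≤ m_j ≤ c_j }`. -/
def Lset (k : ℕ) (c : Fin k → ℕ) : Finset ℕ :=
  (Finset.Icc 0 c).image fun m => ∑ j : Fin k, ((j : ℕ) + 1) * m j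

/-- The set `𝓛*(a) = { Σ_{i∈I} a_i : I ⊆ {1,…,r} }` of subset sums of `a`. -/
def Lstar (r : ℕ) (a : Fin r → ℕ) : Finset ℕ :=
  (Finset.univ : Finset (Finset (Fin r))).image fun I => ∑ i ∈ I, a i

/-- The fiber counts of a tuple `a : Fin r → Fin k`. -/
def cnt {r k : ℕ} (a : Fin r → Fin k) : Fin k → ℕ :=
  fun i => (Finset.univ.filter fun x => a x = i).card

lemma sum_cnt {r k : ℕ} (a : Fin r → Fin k) : ∑ i : Fin k, cnt a i = r := by
  have := Finset.card_eq_sum_card_fiberwise (s := (Finset.univ : Finset (Fin r)))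
    (t := Finset.univ) (f := a) (fun x _ => Finset.mem_univ _)
  simpa [cnt] using this.symm

lemma prod_comp_eq {r k : ℕ} (a : Fin r → Fin k) (g : Fin k → ℝ) :
    ∏ x : Fin r, g (a x) = ∏ i : Fin k, g i ^ cnt a i := by
  rw [← Finset.prod_fiberwise' Finset.univ a g]
  exact Finset.prod_congr rfl fun j _ => Finset.prod_const _

lemma Lstar_eq_Lset {r k : ℕ} (a : Fin r → Fin k) :
    Lstar r (fun x => (a x : ℕ) + 1) = Lset k (cnt a) := by
  ext n
  simp only [Lstar, Lset, Finset.mem_image, Finset.mem_univ, true_and, Finset.mem_Icc]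
  constructor
  · rintro ⟨I, rfl⟩
    refine ⟨fun i => (I.filter fun x => a x = i).card, ⟨fun i => Nat.zero_le _,
      fun i => Finset.card_le_card (Finset.filter_subset_filter _ (Finset.subset_univ I))⟩, ?_⟩
    rw [← Finset.sum_fiberwise_of_maps_to (g := a) (t := Finset.univ)
      (fun x _ => Finset.mem_univ _) (f := fun x => (a x : ℕ) + 1)]
    refine Finset.sum_congr rfl fun j _ => ?_
    rw [Finset.sum_congr rfl (fun x hx => by rw [(Finset.mem_filter.mp hx).2]),
      Finset.sum_const, smul_eq_mul]
    ring
  · rintro ⟨m, ⟨-, hm⟩, rfl⟩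
    choose S hS hScard using fun i => Finset.exists_subset_card_eq (hm i)
    refine ⟨Finset.univ.biUnion S, ?_⟩
    have hdisj : ∀ i ∈ (Finset.univ : Finset (Fin k)), ∀ j ∈ Finset.univ, i ≠ j →
        Disjoint (S i) (S j) := by
      intro i _ j _ hij
      refine Finset.disjoint_left.mpr fun x hxi hxj => hij ?_
      have h1 := (Finset.mem_filter.mp (hS i hxi)).2
      have h2 := (Finset.mem_filter.mp (hS j hxj)).2
      rw [← h1, ← h2]
    rw [Finset.sum_biUnion hdisj]
    refine Finset.sum_congr rfl fun j _ => ?_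
    rw [Finset.sum_congr rfl (fun x hx => by
        rw [(Finset.mem_filter.mp (hS j hx)).2]),
      Finset.sum_const, hScard, smul_eq_mul]
    ring

lemma cnt_cons {r k : ℕ} (j : Fin k) (b : Fin r → Fin k) :
    cnt (Fin.cons j b) = fun i => (if j = i then 1 else 0) + cnt b i := by
  funext i
  simp only [cnt, Finset.card_filter, Fin.sum_univ_succ, Fin.cons_zero, Fin.cons_succ]

lemma card_cnt_fiber {k : ℕ} : ∀ {r : ℕ} (c : Fin k → ℕ), (∑ i : Fin k, c i = r) →
    (Finset.univ.filter fun a : Fin r → Fin k => cnt a = c).card *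
      ∏ i : Fin k, (c i).factorial = r.factorial := by
  intro r
  induction r with
  | zero =>
    intro c hc
    have hc0 : ∀ i, c i = 0 := fun i =>
      (Finset.sum_eq_zero_iff.mp hc) i (Finset.mem_univ i)
    have h1 : ∀ a : Fin 0 → Fin k, cnt a = c := by
      intro a; funext i; rw [hc0 i]; simp [cnt]
    rw [Finset.filter_true_of_mem fun a _ => h1 a]
    simp [hc0]
  | succ r IH =>
    intro c hc
    have hsplit : (Finset.univ.filter fun a : Fin (r+1) → Fin k => cnt a = c).card =
        ∑ j : Fin k,
          (Finset.univ.filter fun b : Fin r → Fin k => cnt (Fin.cons j b) = c).card := by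
      rw [Finset.card_eq_sum_card_fiberwise
        (f := fun a : Fin (r+1) → Fin k => a 0) (t := Finset.univ)
        (fun x _ => Finset.mem_univ _)]
      refine Finset.sum_congr rfl fun j _ => ?_
      refine Finset.card_nbij' (fun a => Fin.tail a) (fun b => Fin.cons j b)
        ?_ ?_ ?_ ?_
      · intro a ha
        simp only [Finset.mem_coe, Finset.mem_filter, Finset.mem_univ, true_and] at ha ⊢
        rw [← ha.2, Fin.cons_self_tail]
        exact ha.1
      · intro b hb
        simp only [Finset.mem_coe, Finset.mem_filter, Finset.mem_univ, true_and] at hb ⊢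
        exact ⟨hb, Fin.cons_zero _ _⟩
      · intro a ha
        simp only [Finset.mem_coe, Finset.mem_filter, Finset.mem_univ, true_and] at ha
        show Fin.cons j (Fin.tail a) = a
        rw [← ha.2, Fin.cons_self_tail]
      · intro b hb
        funext x
        simp [Fin.tail]
    have hterm : ∀ j : Fin k,
        (Finset.univ.filter fun b : Fin r → Fin k => cnt (Fin.cons j b) = c).card *
          ∏ i : Fin k, (c i).factorial = c j * r.factorial := by
      intro j
      by_cases hcj : c j = 0
      · have : (Finset.univ.filter fun b : Fin r → Fin k => cnt (Fin.cons j b) = c) = ∅ := by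
          refine Finset.filter_false_of_mem fun b _ h => ?_
          have := congrFun h j
          rw [cnt_cons] at this
          simp at this
          omega
        rw [this]
        simp [hcj]
      · set c' : Fin k → ℕ := fun i => c i - (if j = i then 1 else 0) with hc'
        have hcc : ∀ b : Fin r → Fin k, cnt (Fin.cons j b) = c ↔ cnt b = c' := by
          intro b
          constructor
          · intro h
            funext i
            have := congrFun h i
            rw [cnt_cons] at this
            simp only [hc']
            by_cases hji : j = i
            · subst hji; simp at this ⊢; omega
            · simp [hji] at this ⊢; omega
          · intro h
            funext i
            rw [cnt_cons]
            have := congrFun h i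
            simp only [hc'] at this
            by_cases hji : j = i
            · subst hji; simp at this ⊢; omega
            · simp [hji] at this ⊢; omega
        have hsum' : ∑ i : Fin k, c' i = r := by
          have : ∑ i : Fin k, c' i + ∑ i : Fin k, (if j = i then 1 else 0) =
              ∑ i : Fin k, c i := by
            rw [← Finset.sum_add_distrib]
            refine Finset.sum_congr rfl fun i _ => ?_
            simp only [hc']
            by_cases hji : j = i
            · subst hji; simp; omega
            · simp [hji]
          simp only [Finset.sum_ite_eq, Finset.mem_univ, if_true] at this
          omega
        have hprod : ∏ i : Fin k, (c i).factorial =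
            c j * ∏ i : Fin k, (c' i).factorial := by
          rw [← Finset.mul_prod_erase Finset.univ _ (Finset.mem_univ j),
            ← Finset.mul_prod_erase Finset.univ _ (Finset.mem_univ j)]
          have h1 : (c j).factorial = c j * (c' j).factorial := by
            have : c' j = c j - 1 := by simp [hc']
            rw [this]
            cases' Nat.exists_eq_succ_of_ne_zero hcj with n hn
            rw [hn]
            simp [Nat.factorial_succ]
          rw [h1]
          have h2 : ∏ i ∈ Finset.univ.erase j, (c i).factorial =
              ∏ i ∈ Finset.univ.erase j, (c' i).factorial := by
            refine Finset.prod_congr rfl fun i hi => ?_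
            have : c' i = c i := by
              simp [hc', Ne.symm (Finset.ne_of_mem_erase hi)]
            rw [this]
          rw [h2]
          ring
        calc (Finset.univ.filter fun b : Fin r → Fin k => cnt (Fin.cons j b) = c).card *
              ∏ i : Fin k, (c i).factorial
            = (Finset.univ.filter fun b : Fin r → Fin k => cnt b = c').card *
              (c j * ∏ i : Fin k, (c' i).factorial) := by
              rw [hprod]
              congr 2
              exact Finset.filter_congr fun b _ => by rw [hcc b]
          _ = c j * ((Finset.univ.filter fun b : Fin r → Fin k => cnt b = c').card *
              ∏ i : Fin k, (c' i).factorial) := by ring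
          _ = c j * r.factorial := by rw [IH c' hsum']
    rw [hsplit, Finset.sum_mul]
    rw [Finset.sum_congr rfl fun j _ => hterm j, ← Finset.sum_mul, hc,
      Nat.factorial_succ]

theorem sum_Lset_eq_sum_Lstar (k r : ℕ) (hk : 1 ≤ k) (hr : 1 ≤ r) :
    ∑ c ∈ Finset.Nat.antidiagonalTuple k r,
        ((Lset k c).card : ℝ) /
          ∏ i : Fin k, ((Nat.factorial (c i) * ((i : ℕ) + 1) ^ (c i) : ℕ) : ℝ) =
      (1 / (Nat.factorial r : ℝ)) *
        ∑ a : Fin r → Fin k,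
          ((Lstar r fun i => (a i : ℕ) + 1).card : ℝ) / ∏ i : Fin r, ((a i : ℕ) + 1 : ℝ) := by
  have hF : ∀ a : Fin r → Fin k,
      ((Lstar r fun i => (a i : ℕ) + 1).card : ℝ) / ∏ i : Fin r, ((a i : ℕ) + 1 : ℝ) =
      ((Lset k (cnt a)).card : ℝ) / ∏ i : Fin k, ((i:ℕ)+1:ℝ) ^ cnt a i := by
    intro a
    rw [Lstar_eq_Lset a, ← prod_comp_eq a (fun j => ((j:ℕ)+1:ℝ))]
  have hstep : ∑ a : Fin r → Fin k,
      ((Lstar r fun i => (a i : ℕ) + 1).card : ℝ) / ∏ i : Fin r, ((a i : ℕ) + 1 : ℝ) =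
      ∑ c ∈ Finset.Nat.antidiagonalTuple k r,
        ((Finset.univ.filter fun a : Fin r → Fin k => cnt a = c).card : ℝ) *
          (((Lset k c).card : ℝ) / ∏ i : Fin k, ((i:ℕ)+1:ℝ) ^ c i) := by
    rw [Finset.sum_congr rfl fun a _ => hF a, ← Finset.sum_fiberwise_of_maps_to'
      (g := cnt) (t := Finset.Nat.antidiagonalTuple k r)
      (fun a _ => (Finset.Nat.mem_antidiagonalTuple).mpr (sum_cnt a))
      (f := fun c => ((Lset k c).card : ℝ) / ∏ i : Fin k, ((i:ℕ)+1:ℝ) ^ c i)]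
    exact Finset.sum_congr rfl fun c _ => by rw [Finset.sum_const, nsmul_eq_mul]
  rw [hstep, Finset.mul_sum]
  refine Finset.sum_congr rfl fun c hc => ?_
  have hcsum : ∑ i : Fin k, c i = r := (Finset.Nat.mem_antidiagonalTuple).mp hc
  have key : ((Finset.univ.filter fun a : Fin r → Fin k => cnt a = c).card : ℝ) *
      ∏ i : Fin k, ((c i).factorial : ℝ) = (r.factorial : ℝ) := by
    exact_mod_cast congrArg (Nat.cast : ℕ → ℝ) (card_cnt_fiber c hcsum)
  have hA : (0:ℝ) < ∏ i : Fin k, ((c i).factorial : ℝ) :=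
    Finset.prod_pos fun i _ => by exact_mod_cast (c i).factorial_pos
  have hB : (0:ℝ) < ∏ i : Fin k, ((i:ℕ)+1:ℝ) ^ c i :=
    Finset.prod_pos fun i _ => pow_pos (by positivity) _
  have hr' : (0:ℝ) < (r.factorial : ℝ) := by exact_mod_cast r.factorial_pos
  have hden : ∏ i : Fin k, ((Nat.factorial (c i) * ((i : ℕ) + 1) ^ (c i) : ℕ) : ℝ) =
      (∏ i : Fin k, ((c i).factorial : ℝ)) * ∏ i : Fin k, ((i:ℕ)+1:ℝ) ^ c i := by
    rw [← Finset.prod_mul_distrib]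
    refine Finset.prod_congr rfl fun i _ => ?_
    push_cast
    ring
  rw [hden]
  field_simp
  rw [← key]; ring
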